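/- Let W be a symmetric positive semidefinite n×n matrix with nonnegative entries and diagonal d, let c ≥ 0, δ ∈ (0,1), and assume w_{ii} ≤ δ·c for all i (all items are δ-light). Let y ∈ [0,1]ⁿ satisfy yᵀWy ≤ c and dᵀy ≤ c, let α ∈ (0,1), and let X = (X₁,…,X_n) be stochastically independent {0,1}-valued random variables with ℙ[X_i = 1] = α·y_i. Then for every ℓ ∈ {1,…,n}: ℙ[ XᵀWX ≤ c and X_ℓ = 1 ] ≥ (1 − g(α,δ)) · ℙ[X_ℓ = 1], where g(α,δ) = α·(1 + (1 + δ^{1/3})³) + (1−α)·δ. -/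

import Mathlib

open MeasureTheory ProbabilityTheory

/-- The quadratic form `xᵀ W x`. -/
noncomputable def quadForm {ι : Type*} [Fintype ι] (W : Matrix ι ι ℝ) (x : ι → ℝ) : ℝ :=
  ∑ i, ∑ j, W i j * x i * x j

lemma quad_expand {n : ℕ} (W : Matrix (Fin n) (Fin n) ℝ) (hsym : ∀ a b, W a b = W b a)
    (x : Fin n → ℝ) (i : Fin n) (t : ℝ) :
    quadForm W (fun k => x k + t * (if k = i then 1 else 0))
      = quadForm W x + 2 * t * (∑ j, W i j * x j) + t ^ 2 * W i i := by
  unfold quadForm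
  have h : ∀ a b : Fin n, W a b * (x a + t * (if a = i then 1 else 0)) *
      (x b + t * (if b = i then 1 else 0))
    = W a b * x a * x b + (if b = i then W a b * x a * t else 0)
      + (if a = i then W a b * x b * t else 0)
      + (if a = i then (if b = i then t ^ 2 * W a b else 0) else 0) := by
    intro a b
    by_cases ha : a = i <;> by_cases hb : b = i <;> simp [ha, hb] <;> ring
  simp_rw [h, Finset.sum_add_distrib, Finset.sum_ite_eq', Finset.mem_univ, if_true]
  have e3 : ∀ a : Fin n, (∑ b, if a = i then W a b * x b * t else 0)
      = if a = i then ∑ b, W i b * x b * t else 0 := by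
    intro a
    by_cases ha : a = i <;> simp [ha]
  have e4 : ∀ a : Fin n, (∑ b, if a = i then (if b = i then t ^ 2 * W a b else 0) else 0)
      = if a = i then t ^ 2 * W i i else 0 := by
    intro a
    by_cases ha : a = i <;> simp [ha]
  simp_rw [e3, e4, Finset.sum_ite_eq', Finset.mem_univ, if_true]
  have h2 : ∀ a : Fin n, W a i * x a * t = W i a * x a * t := fun a => by rw [hsym]
  simp_rw [h2, ← Finset.sum_mul]
  ring

lemma quadForm_nonneg {n : ℕ} {W : Matrix (Fin n) (Fin n) ℝ} (hpsd : W.PosSemidef)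
    (x : Fin n → ℝ) : 0 ≤ quadForm W x := by
  have h := hpsd.dotProduct_mulVec_nonneg x
  simp only [dotProduct, Matrix.mulVec, star_trivial, dotProduct] at h
  unfold quadForm
  calc (0:ℝ) ≤ ∑ a, x a * ∑ b, W a b * x b := h
  _ = _ := by simp_rw [Finset.mul_sum]; exact Finset.sum_congr rfl fun a _ =>
      Finset.sum_congr rfl fun b _ => by ring

lemma quad_cs {n : ℕ} {W : Matrix (Fin n) (Fin n) ℝ} (hpsd : W.PosSemidef)
    (x : Fin n → ℝ) (i : Fin n) :
    (∑ j, W i j * x j) ^ 2 ≤ W i i * quadForm W x := by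
  have hsym : ∀ a b, W a b = W b a := fun a b => by
    have := congrFun (congrFun hpsd.1 a) b
    simpa [Matrix.conjTranspose_apply] using this.symm
  have key : ∀ t : ℝ, 0 ≤ W i i * (t * t) + (2 * (∑ j, W i j * x j)) * t + quadForm W x := by
    intro t
    have h := quadForm_nonneg hpsd (fun k => x k + t * (if k = i then 1 else 0))
    rw [quad_expand W hsym x i t] at h
    nlinarith [h]
  have hd := discrim_le_zero key
  rw [discrim] at hd
  nlinarith [hd]

lemma arith_key (α δ : ℝ) (hα0 : 0 < α) (hα1 : α < 1) (hδ0 : 0 < δ) (hδ1 : δ < 1) :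
    α^2 + 2*α*(δ^((1:ℝ)/2)) + δ + α
      ≤ α * (1 + (1 + δ ^ ((1:ℝ)/3)) ^ 3) + (1 - α) * δ := by
  set t := δ ^ ((1:ℝ)/3) with ht
  set s := δ ^ ((1:ℝ)/2) with hs
  have ht0 : 0 ≤ t := Real.rpow_nonneg hδ0.le _
  have hs0 : 0 ≤ s := Real.rpow_nonneg hδ0.le _
  have hst : s ≤ t := Real.rpow_le_rpow_of_exponent_ge hδ0 hδ1.le (by norm_num)
  have ht3 : t ^ 3 = δ := by
    rw [ht, ← Real.rpow_natCast (δ ^ ((1:ℝ)/3)) 3, ← Real.rpow_mul hδ0.le]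
    norm_num
  nlinarith [mul_nonneg hα0.le (mul_nonneg ht0 ht0), mul_nonneg hα0.le (sub_nonneg.mpr hst),
    mul_nonneg hα0.le ht0]

lemma quadForm_single {n : ℕ} (W : Matrix (Fin n) (Fin n) ℝ) (j : Fin n) :
    quadForm W (fun k => if k = j then 1 else 0) = W j j := by
  unfold quadForm
  have h : ∀ a b : Fin n, W a b * (if a = j then (1:ℝ) else 0) * (if b = j then 1 else 0)
      = if a = j then (if b = j then W a b else 0) else 0 := by
    intro a b; by_cases ha : a = j <;> by_cases hb : b = j <;> simp [ha, hb]
  simp_rw [h]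
  have h2 : ∀ a : Fin n, (∑ b, if a = j then (if b = j then W a b else 0) else 0)
      = if a = j then W a j else 0 := by
    intro a; by_cases ha : a = j <;> simp [ha]
  simp_rw [h2, Finset.sum_ite_eq', Finset.mem_univ, if_true]


set_option maxHeartbeats 4000000 in
theorem stmt_13 {n : ℕ} (W : Matrix (Fin n) (Fin n) ℝ) (hpsd : W.PosSemidef)
    (hW : ∀ i j, 0 ≤ W i j) (c : ℝ) (hc : 0 ≤ c)
    (δ : ℝ) (hδ : δ ∈ Set.Ioo (0:ℝ) 1) (hlight : ∀ i, W i i ≤ δ * c)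
    (y : Fin n → ℝ) (hy : ∀ i, y i ∈ Set.Icc (0:ℝ) 1)
    (h1 : quadForm W y ≤ c) (h2 : (∑ i, W i i * y i) ≤ c)
    (α : ℝ) (hα : α ∈ Set.Ioo (0:ℝ) 1)
    {Ω : Type*} [MeasurableSpace Ω] (μ : Measure Ω) [IsProbabilityMeasure μ]
    (X : Fin n → Ω → ℝ) (hmeas : ∀ i, Measurable (X i))
    (hindep : iIndepFun X μ)
    (hbin : ∀ i ω, X i ω = 0 ∨ X i ω = 1)
    (hdist : ∀ i, μ {ω | X i ω = 1} = ENNReal.ofReal (α * y i))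
    (ℓ : Fin n) :
    ENNReal.ofReal (1 - (α * (1 + (1 + δ ^ ((1:ℝ) / 3)) ^ 3) + (1 - α) * δ)) *
        μ {ω | X ℓ ω = 1}
      ≤ μ {ω | quadForm W (fun i => X i ω) ≤ c ∧ X ℓ ω = 1} := by
  obtain ⟨hδ0, hδ1⟩ := hδ
  obtain ⟨hα0, hα1⟩ := hα
  set G : ℝ := α * (1 + (1 + δ ^ ((1:ℝ)/3)) ^ 3) + (1 - α) * δ with hGdef
  have hG0 : 0 ≤ G := by
    have h3 : (0:ℝ) ≤ (1 + δ ^ ((1:ℝ)/3)) ^ 3 := by positivity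
    rw [hGdef]
    nlinarith [mul_nonneg hα0.le h3, mul_nonneg (by linarith : (0:ℝ) ≤ 1 - α) hδ0.le]
  have hsym : ∀ a b, W a b = W b a := fun a b => by
    have := congrFun (congrFun hpsd.1 a) b
    simpa [Matrix.conjTranspose_apply] using this.symm
  -- trivial case: 1 - G ≤ 0
  rcases le_or_gt (1 - G) 0 with hG1 | hG1
  · rw [ENNReal.ofReal_eq_zero.mpr hG1, zero_mul]
    exact zero_le
  -- notation
  have hp0 : ∀ i, 0 ≤ α * y i := fun i => mul_nonneg hα0.le (hy i).1
  have hX0 : ∀ i ω, (0:ℝ) ≤ X i ω := by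
    intro i ω; rcases hbin i ω with h | h <;> rw [h] <;> norm_num
  set f : Ω → ℝ := fun ω => quadForm W (fun i => X i ω) with hfdef
  have hf0 : ∀ ω, 0 ≤ f ω := by
    intro ω
    exact Finset.sum_nonneg fun i _ => Finset.sum_nonneg fun j _ =>
      mul_nonneg (mul_nonneg (hW i j) (hX0 i ω)) (hX0 j ω)
  have hfmeas : Measurable f := by
    apply Finset.measurable_sum
    intro i _
    apply Finset.measurable_sum
    intro j _
    exact (measurable_const.mul (hmeas i)).mul (hmeas j)
  -- case c = 0
  rcases eq_or_lt_of_le hc with hc0 | hc0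
  · have hWz : ∀ i j, W i j = 0 := by
      intro i j
      have hii : W i i = 0 := le_antisymm (by have := hlight i; nlinarith) (hW i i)
      have hq := quad_cs hpsd (fun k => if k = j then 1 else 0) i
      rw [quadForm_single W j] at hq
      have hsj : (∑ k, W i k * (if k = j then (1:ℝ) else 0)) = W i j := by
        simp [mul_ite, Finset.sum_ite_eq', Finset.mem_univ]
      rw [hsj, hii, zero_mul] at hq
      nlinarith [hq, sq_nonneg (W i j)]
    have hfz : ∀ ω, f ω = 0 := by
      intro ω
      simp [hfdef, quadForm, hWz]
    have hTeq : {ω | quadForm W (fun i => X i ω) ≤ c ∧ X ℓ ω = 1} = {ω | X ℓ ω = 1} := by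
      ext ω
      simp only [Set.mem_setOf_eq, and_iff_right_iff_imp]
      intro _
      have : quadForm W (fun i => X i ω) = f ω := rfl
      rw [this, hfz ω, ← hc0]
    rw [hTeq]
    calc ENNReal.ofReal (1 - G) * μ {ω | X ℓ ω = 1}
        ≤ 1 * μ {ω | X ℓ ω = 1} := by
          apply mul_le_mul_left
          exact ENNReal.ofReal_le_one.mpr (by linarith)
      _ = μ {ω | X ℓ ω = 1} := one_mul _

  -- main case: 0 < c
  have hQy0 : 0 ≤ quadForm W y := quadForm_nonneg hpsd y
  set sc : ℝ := ∑ j, W ℓ j * y j with hscdef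
  have hs0 : 0 ≤ sc := Finset.sum_nonneg fun j _ => mul_nonneg (hW ℓ j) (hy j).1
  have hs2 : sc ^ 2 ≤ δ * c * c := by
    have hcs := quad_cs hpsd y ℓ
    have hb : W ℓ ℓ * quadForm W y ≤ δ * c * c := by
      have := mul_le_mul (hlight ℓ) h1 hQy0 (by positivity)
      nlinarith [this]
    calc sc ^ 2 ≤ W ℓ ℓ * quadForm W y := hcs
      _ ≤ δ * c * c := hb
  have hrp0 : (0:ℝ) ≤ δ ^ ((1:ℝ)/2) := Real.rpow_nonneg hδ0.le _
  have hT2 : (c * δ ^ ((1:ℝ)/2)) ^ 2 = δ * c * c := by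
    rw [mul_pow, ← Real.rpow_natCast (δ ^ ((1:ℝ)/2)) 2, ← Real.rpow_mul hδ0.le]
    norm_num
    ring
  have hsle : sc ≤ c * δ ^ ((1:ℝ)/2) := by
    calc sc = Real.sqrt (sc ^ 2) := (Real.sqrt_sq hs0).symm
      _ ≤ Real.sqrt ((c * δ ^ ((1:ℝ)/2)) ^ 2) := Real.sqrt_le_sqrt (by rw [hT2]; exact hs2)
      _ = c * δ ^ ((1:ℝ)/2) := Real.sqrt_sq (by positivity)
  set p : Fin n → ℝ := fun i => α * y i with hpdef
  have hq0 : ∀ i, 0 ≤ p i := hp0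
  set u : Fin n → ℝ := fun k => if k = ℓ then 1 else p k with hudef
  set v : Fin n → ℝ := fun k => if k = ℓ then 0 else p k with hvdef
  have hv0 : ∀ k, 0 ≤ v k := by
    intro k
    by_cases hk : k = ℓ
    · simp [hvdef, hk]
    · simp [hvdef, hk, hq0 k]
  have hvle : ∀ k, v k ≤ p k := by
    intro k
    by_cases hk : k = ℓ
    · simp only [hvdef, if_pos hk, hk]
      exact hq0 ℓ
    · simp [hvdef, hk]
  have hQv : quadForm W v ≤ α^2 * quadForm W y := by
    have step1 : quadForm W v ≤ quadForm W p := by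
      unfold quadForm
      refine Finset.sum_le_sum fun i _ => Finset.sum_le_sum fun j _ => ?_
      calc W i j * v i * v j ≤ W i j * p i * v j :=
            mul_le_mul_of_nonneg_right (mul_le_mul_of_nonneg_left (hvle i) (hW i j)) (hv0 j)
        _ ≤ W i j * p i * p j :=
            mul_le_mul_of_nonneg_left (hvle j) (mul_nonneg (hW i j) (hq0 i))
    have step2 : quadForm W p = α^2 * quadForm W y := by
      unfold quadForm
      rw [Finset.mul_sum]
      refine Finset.sum_congr rfl fun i _ => ?_
      rw [Finset.mul_sum]
      refine Finset.sum_congr rfl fun j _ => ?_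
      simp only [hpdef]
      ring
    linarith
  have hsv : (∑ j, W ℓ j * v j) ≤ α * sc := by
    rw [hscdef, Finset.mul_sum]
    refine Finset.sum_le_sum fun j _ => ?_
    calc W ℓ j * v j ≤ W ℓ j * p j := mul_le_mul_of_nonneg_left (hvle j) (hW ℓ j)
      _ = α * (W ℓ j * y j) := by simp only [hpdef]; ring
  have hQu : quadForm W u ≤ α^2*c + 2*(α*(c*δ^((1:ℝ)/2))) + δ*c := by
    have hueq : u = fun k => v k + 1 * (if k = ℓ then 1 else 0) := by
      funext k; by_cases hk : k = ℓ <;> simp [hudef, hvdef, hk]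
    rw [hueq, quad_expand W hsym v ℓ 1]
    have hαs : (∑ j, W ℓ j * v j) ≤ α * (c * δ^((1:ℝ)/2)) := by
      calc (∑ j, W ℓ j * v j) ≤ α * sc := hsv
        _ ≤ α * (c * δ^((1:ℝ)/2)) := mul_le_mul_of_nonneg_left hsle hα0.le
    have hαQ : α^2 * quadForm W y ≤ α^2 * c := mul_le_mul_of_nonneg_left h1 (sq_nonneg α)
    have := hlight ℓ
    nlinarith [hQv, hαs, hαQ]
  -- events
  set E : Fin n → Set Ω := fun i => {ω | X i ω = 1} with hEdef
  have hEmeas : ∀ i, MeasurableSet (E i) := fun i => hmeas i (measurableSet_singleton 1)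
  have hμE : ∀ i, μ (E i) = ENNReal.ofReal (p i) := fun i => hdist i
  have hInd : ∀ i j : Fin n, μ (E i ∩ (E j ∩ E ℓ))
      = ∏ k ∈ ({i, j, ℓ} : Finset (Fin n)), ENNReal.ofReal (p k) := by
    intro i j
    have h := (iIndepFun_iff_measure_inter_preimage_eq_mul.mp hindep)
      ({i, j, ℓ} : Finset (Fin n))
      (sets := fun _ => ({1} : Set ℝ)) (fun k _ => measurableSet_singleton 1)
    have hpre : ∀ k : Fin n, X k ⁻¹' ({1} : Set ℝ) = E k := fun k => rfl
    simp only [hpre] at h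
    rw [show E i ∩ (E j ∩ E ℓ) = ⋂ k ∈ ({i, j, ℓ} : Finset (Fin n)), E k by
      simp only [Finset.set_biInter_insert, Finset.set_biInter_singleton], h]
    exact Finset.prod_congr rfl fun k _ => hμE k
  have hP3 : ∀ i j, (μ (E i ∩ (E j ∩ E ℓ))).toReal
      = ∏ k ∈ ({i, j, ℓ} : Finset (Fin n)), p k := by
    intro i j
    rw [hInd i j, ENNReal.toReal_prod]
    exact Finset.prod_congr rfl fun k _ => ENNReal.toReal_ofReal (hq0 k)
  have hu1 : u ℓ = 1 := by simp [hudef]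
  have huP : ∀ k, k ≠ ℓ → u k = p k := by
    intro k hk; simp [hudef, hk]
  have hP3le : ∀ i j, (∏ k ∈ ({i, j, ℓ} : Finset (Fin n)), p k)
      ≤ p ℓ * (u i * u j) + (if j = i then p ℓ * p i else 0) := by
    intro i j
    by_cases hi : i = ℓ <;> by_cases hj : j = ℓ
    · have hji : j = i := by rw [hi, hj]
      have hset : ({i, j, ℓ} : Finset (Fin n)) = {ℓ} := by
        ext x; simp only [Finset.mem_insert, Finset.mem_singleton, hi, hj]; tauto
      rw [hset, Finset.prod_singleton, if_pos hji, hi, hj, hu1]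
      nlinarith [mul_nonneg (hq0 ℓ) (hq0 ℓ), hq0 ℓ]
    · have hji : ¬ (j = i) := fun h => hj (h.trans hi)
      have hset : ({i, j, ℓ} : Finset (Fin n)) = {j, ℓ} := by
        ext x; simp only [Finset.mem_insert, Finset.mem_singleton, hi]; tauto
      rw [hset, Finset.prod_pair hj, if_neg hji, hi, hu1, huP j hj]
      exact le_of_eq (by ring)
    · have hji : ¬ (j = i) := fun h => hi (h.symm.trans hj)
      have hset : ({i, j, ℓ} : Finset (Fin n)) = {i, ℓ} := by
        ext x; simp only [Finset.mem_insert, Finset.mem_singleton, hj]; tauto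
      rw [hset, Finset.prod_pair hi, if_neg hji, hj, hu1, huP i hi]
      exact le_of_eq (by ring)
    · by_cases hij : j = i
      · have hset : ({i, j, ℓ} : Finset (Fin n)) = {i, ℓ} := by
          ext x; simp only [Finset.mem_insert, Finset.mem_singleton, hij]; tauto
        rw [hset, Finset.prod_pair hi, if_pos hij, huP i hi, huP j hj, hij]
        nlinarith [mul_nonneg (hq0 ℓ) (mul_nonneg (hq0 i) (hq0 i))]
      · have hmem : i ∉ ({j, ℓ} : Finset (Fin n)) := by
          simp only [Finset.mem_insert, Finset.mem_singleton]
          push_neg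
          exact ⟨fun h => hij h.symm, hi⟩
        rw [Finset.prod_insert hmem, Finset.prod_pair hj, if_neg hij, huP i hi, huP j hj]
        exact le_of_eq (by ring)
  have hbracket : α^2*c + 2*(α*(c*δ^((1:ℝ)/2))) + δ*c + α * c ≤ c * G := by
    have hak := arith_key α δ hα0 hα1 hδ0 hδ1
    rw [hGdef]
    nlinarith [mul_le_mul_of_nonneg_left hak hc]
  have hdiag : (∑ i, W i i * (p ℓ * p i)) ≤ p ℓ * (α * c) := by
    have hrw : ∀ i : Fin n, W i i * (p ℓ * p i) = (p ℓ * α) * (W i i * y i) := by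
      intro i; simp only [hpdef]; ring
    simp_rw [hrw, ← Finset.mul_sum]
    calc (p ℓ * α) * (∑ i, W i i * y i) ≤ (p ℓ * α) * c :=
        mul_le_mul_of_nonneg_left h2 (mul_nonneg (hq0 ℓ) hα0.le)
      _ = p ℓ * (α * c) := by ring
  have hsum : (∑ i, ∑ j, W i j * (μ (E i ∩ (E j ∩ E ℓ))).toReal) ≤ p ℓ * (c * G) := by
    calc (∑ i, ∑ j, W i j * (μ (E i ∩ (E j ∩ E ℓ))).toReal)
        = ∑ i, ∑ j, W i j * (∏ k ∈ ({i, j, ℓ} : Finset (Fin n)), p k) :=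
          Finset.sum_congr rfl fun i _ => Finset.sum_congr rfl fun j _ => by rw [hP3]
      _ ≤ ∑ i, ∑ j, W i j * (p ℓ * (u i * u j) + (if j = i then p ℓ * p i else 0)) :=
          Finset.sum_le_sum fun i _ => Finset.sum_le_sum fun j _ =>
            mul_le_mul_of_nonneg_left (hP3le i j) (hW i j)
      _ = p ℓ * quadForm W u + ∑ i, W i i * (p ℓ * p i) := by
          simp_rw [mul_add, Finset.sum_add_distrib]
          congr 1
          · unfold quadForm
            rw [Finset.mul_sum]
            refine Finset.sum_congr rfl fun i _ => ?_
            rw [Finset.mul_sum]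
            exact Finset.sum_congr rfl fun j _ => by ring
          · refine Finset.sum_congr rfl fun i _ => ?_
            simp [mul_ite, Finset.sum_ite_eq', Finset.mem_univ]
      _ ≤ p ℓ * (α^2*c + 2*(α*(c*δ^((1:ℝ)/2))) + δ*c) + p ℓ * (α * c) :=
          add_le_add (mul_le_mul_of_nonneg_left hQu (hq0 ℓ)) hdiag
      _ = p ℓ * ((α^2*c + 2*(α*(c*δ^((1:ℝ)/2))) + δ*c) + α * c) := by ring
      _ ≤ p ℓ * (c * G) := mul_le_mul_of_nonneg_left (by linarith [hbracket]) (hq0 ℓ)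
  -- integral
  have hABmeas : ∀ i j : Fin n, MeasurableSet (E i ∩ (E j ∩ E ℓ)) := fun i j =>
    (hEmeas i).inter ((hEmeas j).inter (hEmeas ℓ))
  set F : Ω → ℝ := fun ω => ∑ i, ∑ j,
    Set.indicator (E i ∩ (E j ∩ E ℓ)) (fun _ => W i j) ω with hFdef
  have hFint : Integrable F μ := by
    apply integrable_finset_sum
    intro i _
    apply integrable_finset_sum
    intro j _
    exact (integrable_const (W i j)).indicator (hABmeas i j)
  have hterm : ∀ (i j : Fin n) (ω : Ω), Set.indicator (E i ∩ (E j ∩ E ℓ)) (fun _ => W i j) ω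
      = W i j * X i ω * X j ω * X ℓ ω := by
    intro i j ω
    by_cases hm : ω ∈ E i ∩ (E j ∩ E ℓ)
    · rw [Set.indicator_of_mem hm]
      obtain ⟨h1', h2', h3'⟩ := hm
      have e1 : X i ω = 1 := h1'
      have e2 : X j ω = 1 := h2'
      have e3 : X ℓ ω = 1 := h3'
      rw [e1, e2, e3]; ring
    · rw [Set.indicator_of_notMem hm]
      have hz : X i ω = 0 ∨ X j ω = 0 ∨ X ℓ ω = 0 := by
        by_contra hcon
        push_neg at hcon
        obtain ⟨hi', hj', hl'⟩ := hcon
        exact hm ⟨(hbin i ω).resolve_left hi', (hbin j ω).resolve_left hj',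
          (hbin ℓ ω).resolve_left hl'⟩
      rcases hz with h | h | h <;> rw [h] <;> ring
  have hFeq : ∀ ω, F ω = f ω * X ℓ ω := by
    intro ω
    calc F ω = ∑ i, ∑ j, W i j * X i ω * X j ω * X ℓ ω :=
        Finset.sum_congr rfl fun i _ => Finset.sum_congr rfl fun j _ => hterm i j ω
      _ = f ω * X ℓ ω := by
          simp only [hfdef]
          unfold quadForm
          simp_rw [Finset.sum_mul]
  have hintF : ∫ ω, F ω ∂μ = ∑ i, ∑ j, W i j * (μ (E i ∩ (E j ∩ E ℓ))).toReal := by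
    rw [integral_finset_sum _ (fun i _ => integrable_finset_sum _ fun j _ =>
      (integrable_const (W i j)).indicator (hABmeas i j))]
    refine Finset.sum_congr rfl fun i _ => ?_
    rw [integral_finset_sum _ (fun j _ => (integrable_const (W i j)).indicator (hABmeas i j))]
    refine Finset.sum_congr rfl fun j _ => ?_
    rw [integral_indicator_const (W i j) (hABmeas i j), smul_eq_mul, mul_comm]; rfl
  -- Markov
  set S : Set Ω := {ω | f ω ≤ c} with hSdef
  have hSmeas : MeasurableSet S := measurableSet_le hfmeas measurable_const
  set A : Set Ω := E ℓ \ S with hAdef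
  have hAmeas : MeasurableSet A := (hEmeas ℓ).diff hSmeas
  have hmark : c * (μ A).toReal ≤ ∫ ω, F ω ∂μ := by
    have hle : ∀ ω, Set.indicator A (fun _ => c) ω ≤ F ω := by
      intro ω
      rw [hFeq ω]
      by_cases hA : ω ∈ A
      · rw [Set.indicator_of_mem hA]
        obtain ⟨hE1, hS1⟩ := hA
        have hx : X ℓ ω = 1 := hE1
        have hgt : ¬ f ω ≤ c := hS1
        rw [hx, mul_one]
        linarith [not_le.mp hgt]
      · rw [Set.indicator_of_notMem hA]
        exact mul_nonneg (hf0 ω) (hX0 ℓ ω)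
    calc c * (μ A).toReal = ∫ ω, Set.indicator A (fun _ => c) ω ∂μ := by
          rw [integral_indicator_const c hAmeas, smul_eq_mul, mul_comm]; rfl
      _ ≤ ∫ ω, F ω ∂μ := integral_mono ((integrable_const c).indicator hAmeas) hFint hle
  have hμA : (μ A).toReal ≤ p ℓ * G := by
    have h' : c * (μ A).toReal ≤ c * (p ℓ * G) := by
      calc c * (μ A).toReal ≤ ∫ ω, F ω ∂μ := hmark
        _ = ∑ i, ∑ j, W i j * (μ (E i ∩ (E j ∩ E ℓ))).toReal := hintF
        _ ≤ p ℓ * (c * G) := hsum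
        _ = c * (p ℓ * G) := by ring
    exact le_of_mul_le_mul_left h' hc0
  -- conclusion
  have hTset : {ω | quadForm W (fun i => X i ω) ≤ c ∧ X ℓ ω = 1} = E ℓ ∩ S := by
    ext ω
    exact and_comm
  have hsplitμ : μ (E ℓ ∩ S) + μ A = μ (E ℓ) := measure_inter_add_diff (E ℓ) hSmeas
  have htr : (μ (E ℓ)).toReal = (μ (E ℓ ∩ S)).toReal + (μ A).toReal := by
    rw [← hsplitμ, ENNReal.toReal_add (measure_ne_top μ _) (measure_ne_top μ _)]
  have hEl : (μ (E ℓ)).toReal = p ℓ := by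
    rw [hμE ℓ, ENNReal.toReal_ofReal (hq0 ℓ)]
  have hgoalμ : μ {ω | X ℓ ω = 1} = μ (E ℓ) := rfl
  rw [hTset, hgoalμ, hμE ℓ, ← ENNReal.ofReal_mul (by linarith : (0:ℝ) ≤ 1 - G)]
  apply ENNReal.ofReal_le_of_le_toReal
  nlinarith [hμA, htr, hEl, hq0 ℓ]
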